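/- For every c > 0 and every smooth real function f with compact support contained in (0,∞) one has ∫₀^∞ [f′(s)² − (c/s) f(s)²] ds ≥ −(c²/4) ∫₀^∞ f(s)² ds. -/

import Mathlib

open MeasureTheory Set
open scoped ENNReal NNReal Pointwise

noncomputable section

/-- `Euc k` is the Euclidean space `ℝᵏ`. -/
abbrev Euc (k : ℕ) := EuclideanSpace ℝ (Fin k)

/-- An open set `U ⊆ ℝ^m` has Lipschitz boundary: near every boundary point, after an
affine isometry, `U` is the subgraph of a Lipschitz function of the first `m-1` coordinates. -/
def HasLipschitzBoundary {m : ℕ} (U : Set (Euc m)) : Prop :=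
  ∀ p ∈ frontier U,
    ∃ (hm : 0 < m) (r : ℝ) (Φ : Euc m ≃ᵃⁱ[ℝ] Euc m)
      (h : Euc (m - 1) → ℝ) (K : ℝ≥0),
      0 < r ∧ Φ 0 = p ∧ LipschitzWith K h ∧ h 0 = 0 ∧
      U ∩ Metric.ball p r =
        (Φ '' {y : Euc m | y ⟨m - 1, Nat.sub_lt hm Nat.one_pos⟩ <
            h (WithLp.toLp 2 (fun i : Fin (m - 1) => y ⟨i.1, lt_of_lt_of_le i.2 (Nat.sub_le m 1)⟩))}) ∩
          Metric.ball p r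

/-- The last `n` coordinates `x′` of a point `x = (x₁, x′) ∈ ℝ^{n+1}`. -/
def tailE {n : ℕ} (x : Euc (n + 1)) : Euc n := WithLp.toLp 2 (fun i : Fin n => x i.succ)

/-- The infinite sharp cone `Ω_ε = {(x₁,x′) : x₁ > 0, x′ ∈ ε x₁ ω}`. -/
def cone (n : ℕ) (ω : Set (Euc n)) (ε : ℝ) : Set (Euc (n + 1)) :=
  {x | 0 < x 0 ∧ tailE x ∈ (ε * x 0) • ω}

/-- The geometric constant `N_ω = σ_{n-1}(∂ω) / |ω|`. -/
def Nomega (n : ℕ) (ω : Set (Euc n)) : ℝ :=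
  (μH[(n : ℝ) - 1] (frontier ω)).toReal / (volume ω).toReal

/-- The `j`-th min-max value `Λ_j(q, D)`: infimum over `j`-dimensional subspaces `S ⊆ D`
(of functions, identified with their restrictions to `U`) of the supremum of the Rayleigh
quotients `q(u) / ‖u‖²_{L²(U,μ)}` over nonzero `u ∈ S`. -/
def lambdaJ {X : Type*} [MeasurableSpace X] (μ : Measure X) (U : Set X)
    (q : (X → ℝ) → ℝ) (D : Set (X → ℝ)) (j : ℕ) : ℝ :=
  sInf {v : ℝ | ∃ S : Submodule ℝ (X → ℝ), (S : Set (X → ℝ)) ⊆ D ∧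
    Module.finrank ℝ S = j ∧
    (∀ u ∈ S, (∀ x ∈ U, u x = 0) → u = 0) ∧
    v = sSup {w : ℝ | ∃ u ∈ S, u ≠ (0 : X → ℝ) ∧
      w = q u / ∫ x in U, (u x) ^ 2 ∂μ}}

/-- The class of smooth compactly supported functions on `ℝ^{n+1}` vanishing for
`x₁` outside some compact interval `[b,c] ⊆ I`. -/
def Ddom (n : ℕ) (I : Set ℝ) : Set (Euc (n + 1) → ℝ) :=
  {u | ContDiff ℝ (⊤ : ℕ∞) u ∧ HasCompactSupport u ∧
    ∃ b c : ℝ, b ≤ c ∧ Icc b c ⊆ I ∧ ∀ x : Euc (n + 1), x 0 ∉ Icc b c → u x = 0}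

/-- The Robin form `q_ε^α(u) = ∫_{Ω_ε} |∇u|² dx − α ∫_{∂Ω_ε} u² dσ_n`. -/
def qform (n : ℕ) (ω : Set (Euc n)) (α ε : ℝ) (u : Euc (n + 1) → ℝ) : ℝ :=
  (∫ x in cone n ω ε, ‖fderiv ℝ u x‖ ^ 2) -
    α * ∫ x in frontier (cone n ω ε), (u x) ^ 2 ∂μH[(n : ℝ)]

/-- The truncated Robin form `t_ε(u) = ∫_{V_ε} |∇u|² dx − ∫_{∂₀V_ε} u² dσ_n`. -/
def tform (n : ℕ) (ω : Set (Euc n)) (a ε : ℝ) (u : Euc (n + 1) → ℝ) : ℝ :=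
  (∫ x in cone n ω ε ∩ {x | x 0 < a}, ‖fderiv ℝ u x‖ ^ 2) -
    ∫ x in frontier (cone n ω ε) ∩ {x | x 0 < a}, (u x) ^ 2 ∂μH[(n : ℝ)]

/-- The map `X(s,t) = (s, ε s t)`. -/
def Xmap (n : ℕ) (ε s : ℝ) (t : Euc n) : Euc (n + 1) :=
  WithLp.toLp 2 (fun j : Fin (n + 1) => Fin.cases s (fun i => ε * s * t i) j)

/-- Smooth real functions with compact support contained in `I`. -/
def Cc (I : Set ℝ) : Set (ℝ → ℝ) :=
  {f | ContDiff ℝ (⊤ : ℕ∞) f ∧ HasCompactSupport f ∧ tsupport f ⊆ I}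

/-- The 1D form `∫_I [f′(s)² + ((n²−2n)/(4s²) − N/(λ s)) f(s)²] ds`. -/
def aform (n : ℕ) (N lam : ℝ) (I : Set ℝ) (f : ℝ → ℝ) : ℝ :=
  ∫ s in I,
    ((deriv f s) ^ 2 + (((n : ℝ) ^ 2 - 2 * n) / (4 * s ^ 2) - N / (lam * s)) * (f s) ^ 2)

/-- `R = sup_{t ∈ ω} |t|`. -/
def Rsup (n : ℕ) (ω : Set (Euc n)) : ℝ := sSup ((fun t => ‖t‖) '' ω)

/-- 1D Hardy-type inequality with Coulomb potential. -/
theorem statement18 (c : ℝ) (hc : 0 < c) (f : ℝ → ℝ) (hf : f ∈ Cc (Ioi 0)) :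
    ∫ s in Ioi (0 : ℝ), ((deriv f s) ^ 2 - (c / s) * (f s) ^ 2)
      ≥ -(c ^ 2 / 4) * ∫ s in Ioi (0 : ℝ), (f s) ^ 2 := by
  obtain ⟨hsm, hcs, hsupp⟩ := hf
  have hdiff : Differentiable ℝ f := hsm.differentiable (by simp)
  have hf' : ∀ s, HasDerivAt f (deriv f s) s := fun s => (hdiff s).hasDerivAt
  have hcf : Continuous f := hsm.continuous
  have hcd : Continuous (deriv f) := hsm.continuous_deriv (by exact_mod_cast le_top)
  obtain ⟨a, b, ha, hab, hK⟩ : ∃ a b : ℝ, 0 < a ∧ a ≤ b ∧ tsupport f ⊆ Icc a b := by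
    rcases (tsupport f).eq_empty_or_nonempty with h | h
    · exact ⟨1, 1, one_pos, le_refl 1, by simp [h]⟩
    · refine ⟨sInf (tsupport f), sSup (tsupport f), hsupp (hcs.sInf_mem h),
        csInf_le_csSup h hcs.bddBelow hcs.bddAbove, fun x hx =>
          ⟨csInf_le hcs.bddBelow hx, le_csSup hcs.bddAbove hx⟩⟩
  set A : ℝ := a / 2 with hAdef
  set B : ℝ := b + 1 with hBdef
  have hA : 0 < A := by positivity
  have hAa : A < a := by simp [hAdef]; linarith
  have hbB : b < B := by simp [hBdef]
  have hAB : A ≤ B := by linarith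
  have hzero : ∀ s : ℝ, s ∉ Icc a b → f s = 0 ∧ deriv f s = 0 := by
    intro s hs
    have hns : s ∉ tsupport f := fun h => hs (hK h)
    constructor
    · exact image_eq_zero_of_notMem_tsupport hns
    · have : s ∉ Function.support (deriv f) := fun h => hns (support_deriv_subset h)
      simpa using Function.notMem_support.mp this
  -- auxiliary functions
  set g : ℝ → ℝ := fun s => s⁻¹ - c / 2 with hg
  set u : ℝ → ℝ := fun s => deriv f s - g s * f s with hu
  set D : ℝ → ℝ := fun s => -(s ^ 2)⁻¹ * f s ^ 2 + g s * (2 * f s ^ 1 * deriv f s) with hD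
  set φ : ℝ → ℝ := fun s => g s * f s ^ 2 with hφ
  have hφD : ∀ s ∈ uIcc A B, HasDerivAt φ (D s) s := by
    intro s hs
    have hs0 : s ≠ 0 := by
      rw [uIcc_of_le hAB] at hs; exact ne_of_gt (lt_of_lt_of_le hA hs.1)
    have h1 : HasDerivAt g (-(s ^ 2)⁻¹) s := (hasDerivAt_inv hs0).sub_const _
    have h2 : HasDerivAt (fun t => f t ^ 2) (2 * f s ^ 1 * deriv f s) s := (hf' s).pow 2
    have h3 : HasDerivAt (fun t => g t * f t ^ 2) (-(s ^ 2)⁻¹ * f s ^ 2 + g s * (2 * f s ^ 1 * deriv f s)) s := h1.mul h2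
    simpa [hφ, hD] using h3
  -- continuity on uIcc
  have hIcc : uIcc A B = Icc A B := uIcc_of_le hAB
  have hne : ∀ s ∈ uIcc A B, s ≠ 0 := by
    intro s hs; rw [hIcc] at hs; exact ne_of_gt (lt_of_lt_of_le hA hs.1)
  have hcg : ContinuousOn g (uIcc A B) :=
    (continuousOn_id.inv₀ hne).sub continuousOn_const
  have hintD : IntervalIntegrable D volume A B := by
    apply ContinuousOn.intervalIntegrable
    apply ContinuousOn.add
    · exact (((((continuous_pow 2).continuousOn).inv₀
        (fun s hs => pow_ne_zero 2 (hne s hs))).neg).mul (hcf.pow 2).continuousOn)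
    · exact hcg.mul (Continuous.continuousOn (by continuity))
  have hintu2 : IntervalIntegrable (fun s => u s ^ 2) volume A B := by
    apply ContinuousOn.intervalIntegrable
    exact ((hcd.continuousOn.sub (hcg.mul hcf.continuousOn))).pow 2
  have hintf2 : IntervalIntegrable (fun s => f s ^ 2) volume A B :=
    (hcf.pow 2).intervalIntegrable A B
  -- integral of D is zero
  have hφA : φ A = 0 := by simp [hφ, (hzero A (fun h => absurd h.1 (not_le.mpr hAa))).1]
  have hφB : φ B = 0 := by simp [hφ, (hzero B (fun h => absurd h.2 (not_le.mpr hbB))).1]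
  have hDint : ∫ s in A..B, D s = 0 := by
    rw [intervalIntegral.integral_eq_sub_of_hasDerivAt hφD hintD, hφA, hφB, sub_zero]
  -- pointwise identity
  have hpt : ∀ s ∈ uIcc A B,
      (deriv f s) ^ 2 - (c / s) * (f s) ^ 2 = u s ^ 2 + D s - c ^ 2 / 4 * f s ^ 2 := by
    intro s hs
    have hs0 : s ≠ 0 := hne s hs
    simp only [hu, hD, hg]
    field_simp
    ring
  -- reduce Ioi integrals to Ioc A B
  have hvan : ∀ s ∈ Ioi (0:ℝ) \ Ioc A B, f s = 0 ∧ deriv f s = 0 := by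
    intro s hs
    apply hzero
    intro hsab
    exact hs.2 ⟨lt_of_lt_of_le hAa hsab.1, le_trans hsab.2 (le_of_lt hbB)⟩
  have hsub : Ioc A B ⊆ Ioi (0:ℝ) := fun s hs => lt_trans hA hs.1
  have hred1 : ∫ s in Ioi (0:ℝ), ((deriv f s) ^ 2 - (c / s) * (f s) ^ 2)
      = ∫ s in A..B, ((deriv f s) ^ 2 - (c / s) * (f s) ^ 2) := by
    rw [intervalIntegral.integral_of_le hAB]
    exact setIntegral_eq_of_subset_of_forall_diff_eq_zero measurableSet_Ioi hsub
      (fun s hs => by rcases hvan s hs with ⟨h1, h2⟩; simp [h1, h2])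
  have hred2 : ∫ s in Ioi (0:ℝ), (f s) ^ 2 = ∫ s in A..B, (f s) ^ 2 := by
    rw [intervalIntegral.integral_of_le hAB]
    exact setIntegral_eq_of_subset_of_forall_diff_eq_zero measurableSet_Ioi hsub
      (fun s hs => by simp [(hvan s hs).1])
  rw [hred1, hred2]
  have hsplit : ∫ s in A..B, ((deriv f s) ^ 2 - (c / s) * (f s) ^ 2)
      = (∫ s in A..B, u s ^ 2) + (∫ s in A..B, D s)
        - c ^ 2 / 4 * ∫ s in A..B, f s ^ 2 := by
    rw [← intervalIntegral.integral_const_mul, ← intervalIntegral.integral_add hintu2 hintD,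
      ← intervalIntegral.integral_sub (hintu2.add hintD) (hintf2.const_mul _)]
    exact intervalIntegral.integral_congr hpt
  rw [hsplit, hDint, add_zero]
  have hu2 : 0 ≤ ∫ s in A..B, u s ^ 2 :=
    intervalIntegral.integral_nonneg hAB (fun s _ => sq_nonneg _)
  linarith
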